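/- arXiv:0806.4401 — 7 statements merged into one kernel-verified Lean document; each statement's English description precedes it below -/
import Mathlib

section
/- For a prime P ≥ 2 and any integer i with 2 ≤ i ≤ P+2, the quantity (1/P) · C(P+i-3, i-2) · C(2P, P-i+1) is a positive integer, where C denotes the binomial coefficient. -/
/-- For a prime `P ≥ 2` and any integer `i` with `2 ≤ i ≤ P+2`, the quantity
`(1/P) · C(P+i-3, i-2) · C(2P, P-i+1)` is a positive integer. -/
theorem pure_diagram_entries_are_positive_integers (P i : ℕ) (hP : P.Prime)
    (h2 : 2 ≤ i) (hi : i ≤ P + 2) :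
    ∃ m : ℕ, 0 < m ∧
      Nat.choose (P + i - 3) (i - 2) * Nat.choose (2 * P) (P - i + 1) = P * m := by
  have hP2 := hP.two_le
  set k := P - i + 1 with hk
  have hk1 : 1 ≤ k := by omega
  have hkP : k < P := by omega
  -- P divides C(2P, k)
  have hdvd : P ∣ Nat.choose (2 * P) k := by
    have h := Nat.add_one_mul_choose_eq (2 * P - 1) (k - 1)
    have e1 : 2 * P - 1 + 1 = 2 * P := by omega
    have e2 : k - 1 + 1 = k := by omega
    rw [e1, e2] at h
    have hpk : P ∣ Nat.choose (2 * P) k * k := by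
      rw [← h]; exact ⟨2 * Nat.choose (2 * P - 1) (k - 1), by ring⟩
    rcases (Nat.Prime.dvd_mul hP).mp hpk with h' | h'
    · exact h'
    · exact absurd (Nat.le_of_dvd (by omega) h') (by omega)
  -- positivity of the two binomial coefficients
  have hc1 : 0 < Nat.choose (P + i - 3) (i - 2) := Nat.choose_pos (by omega)
  have hc2 : 0 < Nat.choose (2 * P) k := Nat.choose_pos (by omega)
  obtain ⟨m, hm⟩ := hdvd
  refine ⟨Nat.choose (P + i - 3) (i - 2) * m, ?_, by rw [hm]; ring⟩
  have hm0 : 0 < m := by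
    rcases Nat.eq_zero_or_pos m with h0 | h0
    · rw [h0, Nat.mul_zero] at hm; omega
    · exact h0
  positivity
end

section
/- Let C ⊆ Q^n be a rational polyhedral cone that is simplicial, spanned by linearly independent rational vectors v_0, ..., v_s. Then the semigroup of lattice points C ∩ Z^n is finitely generated, and there exists a positive integer m such that every lattice point of C is an N-linear combination of the vectors (1/m)·v_0, ..., (1/m)·v_s. -/
open Finset

private lemma exists_int_of_den_dvd {q : ℚ} {k : ℕ} (h : q.den ∣ k) :
    ∃ z : ℤ, (k : ℚ) * q = z := by
  obtain ⟨t, ht⟩ := h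
  have hd : (q.den : ℚ) ≠ 0 := by exact_mod_cast q.den_pos.ne'
  have h1 : (q.den : ℚ) * q = q.num := by
    rw [mul_comm, ← eq_div_iff hd]
    exact (Rat.num_div_den q).symm
  refine ⟨q.num * t, ?_⟩
  subst ht
  push_cast
  calc ((q.den : ℚ) * t) * q = (t : ℚ) * ((q.den : ℚ) * q) := by ring
  _ = (q.num : ℚ) * t := by rw [h1]; ring

/-- Gordan's lemma with universal denominator for a simplicial rational cone: if
`C ⊆ ℚⁿ` is the cone of nonnegative rational combinations of linearly independent
vectors `v₀, …, v_s`, then the semigroup of lattice points of `C` is finitely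
generated, and there is a positive integer `m` such that every lattice point of `C`
is an `ℕ`-combination of the vectors `(1/m)·vᵢ`. -/
theorem simplicial_cone_lattice_points_fg (n s : ℕ) (v : Fin (s + 1) → (Fin n → ℚ))
    (hv : LinearIndependent ℚ v) :
    (AddSubmonoid.closure {x : Fin n → ℚ |
        (∃ c : Fin (s + 1) → ℚ, (∀ i, 0 ≤ c i) ∧ x = ∑ i, c i • v i) ∧
        (∃ y : Fin n → ℤ, x = fun j => (y j : ℚ))}).FG ∧
    ∃ m : ℕ, 0 < m ∧ ∀ x : Fin n → ℚ,
      ((∃ c : Fin (s + 1) → ℚ, (∀ i, 0 ≤ c i) ∧ x = ∑ i, c i • v i) ∧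
        (∃ y : Fin n → ℤ, x = fun j => (y j : ℚ))) →
      ∃ a : Fin (s + 1) → ℕ, x = ∑ i, (a i : ℚ) • ((m : ℚ)⁻¹ • v i) := by
  classical
  set Sset : Set (Fin n → ℚ) := {x : Fin n → ℚ |
      (∃ c : Fin (s + 1) → ℚ, (∀ i, 0 ≤ c i) ∧ x = ∑ i, c i • v i) ∧
      (∃ y : Fin n → ℤ, x = fun j => (y j : ℚ))} with hSset
  -- coordinate linear map
  set p : Submodule ℚ (Fin n → ℚ) := Submodule.span ℚ (Set.range v) with hp
  obtain ⟨q, hq⟩ := Submodule.exists_isCompl p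
  set F : (Fin n → ℚ) →ₗ[ℚ] (Fin (s+1) → ℚ) :=
    (Finsupp.linearEquivFunOnFinite ℚ ℚ (Fin (s+1))).toLinearMap ∘ₗ
      (hv.repr.comp (Submodule.linearProjOfIsCompl p q hq)) with hF
  have hFv : ∀ i, F (v i) = Pi.single i 1 := by
    intro i
    have hmem : v i ∈ p := Submodule.subset_span ⟨i, rfl⟩
    have h1 : Submodule.linearProjOfIsCompl p q hq (v i) = ⟨v i, hmem⟩ :=
      Submodule.linearProjOfIsCompl_apply_left hq ⟨v i, hmem⟩
    have h2 : hv.repr ⟨v i, hmem⟩ = Finsupp.single i 1 := hv.repr_eq_single i ⟨v i, hmem⟩ rfl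
    simp [hF, LinearMap.comp_apply, h1, h2, Finsupp.single_eq_pi_single]
  have hFc : ∀ c : Fin (s+1) → ℚ, F (∑ i, c i • v i) = c := by
    intro c
    rw [map_sum]
    simp_rw [map_smul, hFv]
    funext k
    simp [Finset.sum_apply, Pi.single_apply]
  -- denominators
  set m : ℕ := ∏ j : Fin n, ∏ i : Fin (s+1), (F (Pi.single j 1) i).den with hmdef
  have hm : 0 < m :=
    Finset.prod_pos fun j _ => Finset.prod_pos fun i _ => (F (Pi.single j 1) i).den_pos
  have hmne : (m : ℚ) ≠ 0 := by exact_mod_cast hm.ne'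
  have hmF : ∀ j i, ∃ z : ℤ, (m : ℚ) * F (Pi.single j 1) i = z := by
    intro j i
    refine exists_int_of_den_dvd ?_
    have h1 : (F (Pi.single j 1) i).den ∣ ∏ i' : Fin (s+1), (F (Pi.single j 1) i').den :=
      Finset.dvd_prod_of_mem (fun i' => (F (Pi.single j 1) i').den) (mem_univ i)
    have h2 : (∏ i' : Fin (s+1), (F (Pi.single j 1) i').den) ∣ m :=
      Finset.dvd_prod_of_mem (fun j' => ∏ i' : Fin (s+1), (F (Pi.single j' 1) i').den)
        (mem_univ j)
    exact dvd_trans h1 h2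
  set d : ℕ := ∏ i : Fin (s+1), ∏ k : Fin n, (v i k).den with hddef
  have hd : 0 < d := Finset.prod_pos fun i _ => Finset.prod_pos fun k _ => (v i k).den_pos
  have hdv : ∀ i k, ∃ z : ℤ, (d : ℚ) * v i k = z := by
    intro i k
    refine exists_int_of_den_dvd ?_
    have h1 : (v i k).den ∣ ∏ k' : Fin n, (v i k').den :=
      Finset.dvd_prod_of_mem (fun k' => (v i k').den) (mem_univ k)
    have h2 : (∏ k' : Fin n, (v i k').den) ∣ d :=
      Finset.dvd_prod_of_mem (fun i' => ∏ k' : Fin n, (v i' k').den) (mem_univ i)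
    exact dvd_trans h1 h2
  -- integrality of m * F x for integral x
  have hintF : ∀ (y : Fin n → ℤ) (i : Fin (s+1)),
      ∃ z : ℤ, (m : ℚ) * F (fun j => (y j : ℚ)) i = z := by
    intro y i
    have hx : (fun j => (y j : ℚ)) = ∑ j, (y j : ℚ) • (Pi.single j (1:ℚ) : Fin n → ℚ) := by
      funext k
      simp [Finset.sum_apply, Pi.single_apply]
    refine ⟨∑ j, y j * (hmF j i).choose, ?_⟩
    rw [hx, map_sum]
    simp_rw [map_smul]
    rw [Finset.sum_apply]
    push_cast
    rw [Finset.mul_sum]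
    refine Finset.sum_congr rfl fun j _ => ?_
    have := (hmF j i).choose_spec
    rw [Pi.smul_apply, smul_eq_mul, ← mul_assoc, mul_comm (m:ℚ) ((y j : ℚ)), mul_assoc]
    exact congrArg (fun t => (y j : ℚ) * t) this
  -- the universal denominator representation
  have key : ∀ x : Fin n → ℚ, x ∈ Sset →
      ∃ a : Fin (s+1) → ℕ, x = ∑ i, (a i : ℚ) • ((m:ℚ)⁻¹ • v i) := by
    rintro x ⟨⟨c, hc0, hxc⟩, y, hy⟩
    have hFx : F x = c := by rw [hxc]; exact hFc c
    have hint : ∀ i, ∃ z : ℤ, (m:ℚ) * c i = z := by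
      intro i
      obtain ⟨z, hz⟩ := hintF y i
      refine ⟨z, ?_⟩
      rw [← hFx, hy]
      exact hz
    choose z hz using hint
    have hz0 : ∀ i, 0 ≤ z i := by
      intro i
      have : (0:ℚ) ≤ (z i : ℚ) := by
        rw [← hz i]
        exact mul_nonneg (by positivity) (hc0 i)
      exact_mod_cast this
    refine ⟨fun i => (z i).toNat, ?_⟩
    rw [hxc]
    refine Finset.sum_congr rfl fun i _ => ?_
    rw [smul_smul]
    congr 1
    have h1 : (((z i).toNat : ℕ) : ℚ) = (z i : ℚ) := by
      rw [← Int.cast_natCast, Int.toNat_of_nonneg (hz0 i)]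
    rw [h1, ← hz i]
    field_simp
  -- the additive monoid hom from ℕ-vectors
  set φ : (Fin (s+1) → ℕ) →+ (Fin n → ℚ) :=
    AddMonoidHom.mk' (fun a => ∑ i, ((a i : ℕ) : ℚ) • ((m:ℚ)⁻¹ • v i))
      (by
        intro a b
        simp only [Pi.add_apply, Nat.cast_add, add_smul, Finset.sum_add_distrib]) with hφ
  have hφa : ∀ a : Fin (s+1) → ℕ, φ a = ∑ i, ((a i : ℕ) : ℚ) • ((m:ℚ)⁻¹ • v i) :=
    fun a => rfl
  -- S is a submonoid
  have hadd : ∀ {x y : Fin n → ℚ}, x ∈ Sset → y ∈ Sset → x + y ∈ Sset := by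
    rintro x x' ⟨⟨c, hc0, rfl⟩, y, hy⟩ ⟨⟨c', hc0', hx'⟩, y', hy'⟩
    constructor
    · refine ⟨c + c', fun i => add_nonneg (hc0 i) (hc0' i), ?_⟩
      rw [hx', ← Finset.sum_add_distrib]
      refine Finset.sum_congr rfl fun i _ => ?_
      rw [Pi.add_apply, add_smul]
    · refine ⟨y + y', ?_⟩
      rw [hy, hy']
      funext k
      push_cast
      simp
  have hzero : (0 : Fin n → ℚ) ∈ Sset := by
    constructor
    · exact ⟨0, fun i => le_refl 0, by simp⟩
    · exact ⟨0, by funext k; simp⟩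
  set M : AddSubmonoid (Fin n → ℚ) :=
    { carrier := Sset
      add_mem' := fun hx hy => hadd hx hy
      zero_mem' := hzero } with hM
  have hSM : AddSubmonoid.closure Sset = M := by
    have h : Sset = (M : Set (Fin n → ℚ)) := rfl
    rw [h, AddSubmonoid.closure_eq]
  -- T and the box
  set N : ℕ := m * d with hNdef
  have hN1 : 1 ≤ N := Nat.one_le_iff_ne_zero.mpr (by positivity)
  set T : Set (Fin (s+1) → ℕ) := {a | ∃ y : Fin n → ℤ, φ a = fun j => (y j : ℚ)} with hT
  set box : Set (Fin (s+1) → ℕ) := {a | ∀ i, a i ≤ N} with hbox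
  have hboxfin : (T ∩ box).Finite := by
    refine Set.Finite.subset (Set.Finite.pi (fun i : Fin (s+1) => Set.finite_Iic N)) ?_
    rintro a ⟨_, ha⟩
    exact fun i _ => ha i
  have hφsingle : ∀ j, φ (Pi.single j N) = (d : ℚ) • v j := by
    intro j
    rw [hφa]
    rw [Finset.sum_eq_single j]
    · rw [Pi.single_eq_same, smul_smul, hNdef]
      congr 1
      push_cast
      field_simp
    · intro i _ hne
      rw [Pi.single_eq_of_ne hne]
      simp
    · intro h
      exact absurd (mem_univ j) h
  have hsingleT : ∀ j, Pi.single j N ∈ T ∩ box := by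
    intro j
    constructor
    · refine ⟨fun k => (hdv j k).choose, ?_⟩
      rw [hφsingle j]
      funext k
      rw [Pi.smul_apply, smul_eq_mul]
      exact (hdv j k).choose_spec
    · intro i
      rcases eq_or_ne i j with rfl | hne
      · rw [Pi.single_eq_same]
      · rw [Pi.single_eq_of_ne hne]
        exact Nat.zero_le N
  -- key induction: T is generated by T ∩ box
  have main : ∀ k (a : Fin (s+1) → ℕ), a ∈ T → (∑ i, a i) ≤ k →
      a ∈ AddSubmonoid.closure (T ∩ box) := by
    intro k
    induction k with
    | zero =>
      intro a _ hsum
      have ha0 : a = 0 := by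
        funext i
        have h := (Finset.sum_eq_zero_iff).mp (Nat.le_zero.mp hsum)
        exact h i (mem_univ i)
      rw [ha0]
      exact zero_mem _
    | succ k ih =>
      intro a ha hsum
      by_cases hb : ∀ i, a i ≤ N
      · exact AddSubmonoid.subset_closure ⟨ha, hb⟩
      · push_neg at hb
        obtain ⟨j, hj⟩ := hb
        set b : Fin (s+1) → ℕ := fun i => a i - (Pi.single j N : Fin (s+1) → ℕ) i with hbdef
        have hab : a = b + Pi.single j N := by
          funext i
          simp only [Pi.add_apply, hbdef]
          rcases eq_or_ne i j with rfl | hne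
          · rw [Pi.single_eq_same]
            omega
          · rw [Pi.single_eq_of_ne hne]
            omega
        have hbT : b ∈ T := by
          obtain ⟨y, hy⟩ := ha
          refine ⟨fun k => y k - (hdv j k).choose, ?_⟩
          have hsum2 : φ a = φ b + φ (Pi.single j N) := by
            rw [hab, map_add]
          have : φ b = φ a - φ (Pi.single j N) := by
            rw [hsum2]; ring
          rw [this, hy, hφsingle j]
          funext k
          have := (hdv j k).choose_spec
          simp only [Pi.sub_apply, Pi.smul_apply, smul_eq_mul]
          push_cast
          rw [← this]
        have hsb : ∑ i, b i ≤ k := by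
          have h1 : ∑ i, a i = (∑ i, b i) + ∑ i, (Pi.single j N : Fin (s+1) → ℕ) i := by
            rw [hab, ← Finset.sum_add_distrib]
            simp [Pi.add_apply]
          have h2 : ∑ i, (Pi.single j N : Fin (s+1) → ℕ) i = N := Finset.sum_pi_single' j N univ |>.trans (by simp)
          omega
        rw [hab]
        exact add_mem (ih b hbT hsb) (AddSubmonoid.subset_closure (hsingleT j))
  have hTsub : ∀ a ∈ T, a ∈ AddSubmonoid.closure (T ∩ box) :=
    fun a ha => main (∑ i, a i) a ha le_rfl
  -- S = φ '' T
  have hφmem : ∀ a ∈ T, φ a ∈ Sset := by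
    intro a ha
    constructor
    · refine ⟨fun i => ((a i : ℕ) : ℚ) * (m:ℚ)⁻¹, fun i => by positivity, ?_⟩
      rw [hφa]
      refine Finset.sum_congr rfl fun i _ => ?_
      rw [smul_smul]
    · exact ha
  have hST : ∀ x ∈ Sset, ∃ a ∈ T, φ a = x := by
    intro x hx
    obtain ⟨a, hax⟩ := key x hx
    refine ⟨a, ?_, hax.symm⟩
    obtain ⟨y, hy⟩ := hx.2
    refine ⟨y, ?_⟩
    rw [hφa, ← hax]
    exact hy
  -- finish
  constructor
  · rw [hSM]
    rw [AddSubmonoid.fg_iff]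
    refine ⟨φ '' (T ∩ box), ?_, hboxfin.image φ⟩
    apply le_antisymm
    · rw [AddSubmonoid.closure_le]
      rintro x ⟨a, ⟨haT, _⟩, rfl⟩
      exact hφmem a haT
    · intro x hx
      obtain ⟨a, haT, rfl⟩ := hST x hx
      have := hTsub a haT
      have h2 : φ a ∈ (AddSubmonoid.closure (T ∩ box)).map φ :=
        ⟨a, this, rfl⟩
      rwa [AddMonoidHom.map_mclosure] at h2
  · exact ⟨m, hm, key⟩
end

section
/- Let S = k[x₁,...,xₙ] be a polynomial ring over a field, and let A be an a×b matrix of linear forms representing the minimal presentation of a module M of codimension ≥ 2, with column degrees j₁ ≤ ... ≤ j_b. If I' ⊆ {1,...,b} has |I'| = a+1 and all a×a minors of the submatrix A_{I'} on columns I' vanish, then there is a subset I'' ⊆ I' and a nonzero syzygy τ on the columns of A indexed by I'' of degree ∑_{i∈I''} j_i, which is strictly less than ∑_{i∈I'} j_i. -/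
/-- The determinant of a square matrix of multivariate polynomials whose `l`-th column
consists of homogeneous polynomials of degree `w l` is homogeneous of degree `∑ l, w l`. -/
lemma det_isHomogeneous_aux {k : Type*} [CommRing k] {n m : ℕ}
    (M : Matrix (Fin m) (Fin m) (MvPolynomial (Fin n) k))
    (w : Fin m → ℕ) (h : ∀ i l, (M i l).IsHomogeneous (w l)) :
    M.det.IsHomogeneous (∑ l, w l) := by
  rw [Matrix.det_apply]
  apply MvPolynomial.IsHomogeneous.sum
  intro σ _
  rw [← MvPolynomial.mem_homogeneousSubmodule, Units.smul_def]
  exact zsmul_mem ((MvPolynomial.mem_homogeneousSubmodule _ _).2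
    (MvPolynomial.IsHomogeneous.prod _ _ _ fun i _ => h (σ i) i)) _

/-- Buchsbaum–Rim second syzygies in lower degree (Lemma `lem:brcol1`): let `A` be the
`a × b` minimal presentation matrix of a graded module, with homogeneous entries, the
`ℓ`-th column consisting of forms of degree `j ℓ ≥ 1`, and `j` sorted increasingly.
If `I'` is a set of `a+1` columns on which all `a × a` minors of `A` vanish, then there
is a subset `I'' ⊆ I'` and a nonzero homogeneous syzygy `τ` supported on the columns
`I''`, of degree `∑_{i ∈ I''} j i`, which is strictly less than `∑_{i ∈ I'} j i`. -/
theorem buchsbaum_rim_lower_degree_syzygy (k : Type*) [Field k] (n a b : ℕ)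
    (A : Matrix (Fin a) (Fin b) (MvPolynomial (Fin n) k))
    (j : Fin b → ℕ) (hj : Monotone j) (hj1 : ∀ ℓ, 1 ≤ j ℓ)
    (hhom : ∀ i ℓ, (A i ℓ).IsHomogeneous (j ℓ))
    (I' : Finset (Fin b)) (hI' : I'.card = a + 1)
    (hminors : ∀ g : Fin a ↪ Fin b, (∀ i, g i ∈ I') → (A.submatrix id g).det = 0) :
    ∃ I'' : Finset (Fin b), I'' ⊆ I' ∧
      ∃ τ : Fin b → MvPolynomial (Fin n) k, τ ≠ 0 ∧
        (∀ ℓ, ℓ ∉ I'' → τ ℓ = 0) ∧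
        (∀ ℓ ∈ I'', (τ ℓ).IsHomogeneous ((∑ i ∈ I'', j i) - j ℓ)) ∧
        (∀ r : Fin a, ∑ ℓ ∈ I'', A r ℓ * τ ℓ = 0) ∧
        (∑ i ∈ I'', j i) < ∑ i ∈ I', j i := by
  classical
  -- `P s` : there is an invertible `s × s` submatrix with columns in `I'`
  let P : ℕ → Prop := fun s => ∃ (r : Fin s ↪ Fin a) (g : Fin s ↪ Fin b),
    (∀ i, g i ∈ I') ∧ (A.submatrix (⇑r) (⇑g)).det ≠ 0
  have hP0 : P 0 := by
    refine ⟨Function.Embedding.ofIsEmpty, Function.Embedding.ofIsEmpty, fun i => i.elim0, ?_⟩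
    simp [Matrix.det_fin_zero]
  have hPa : ¬ P a := by
    rintro ⟨r, g, hgI, hdet⟩
    have hbij : Function.Bijective ⇑r := Finite.injective_iff_bijective.1 r.injective
    let σ : Equiv.Perm (Fin a) := Equiv.ofBijective _ hbij
    have hEq : A.submatrix (⇑r) (⇑g) = (A.submatrix id (⇑g)).submatrix (⇑σ) id := rfl
    rw [hEq, Matrix.det_permute, hminors g hgI, mul_zero] at hdet
    exact hdet rfl
  -- take the largest such `s`
  obtain ⟨s, hs_lt, ⟨r, g, hgI, hdet⟩, hsmax⟩ :
      ∃ s, s < a ∧ P s ∧ ¬ P (s + 1) := by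
    have hspec : P (Nat.findGreatest P a) := Nat.findGreatest_spec (Nat.zero_le a) hP0
    have hle : Nat.findGreatest P a ≤ a := Nat.findGreatest_le a
    have hlt : Nat.findGreatest P a < a :=
      lt_of_le_of_ne hle (fun h => hPa (h ▸ hspec))
    exact ⟨Nat.findGreatest P a, hlt, hspec,
      Nat.findGreatest_is_greatest (Nat.lt_succ_self _) (by omega)⟩
  -- pick a column `ℓ0 ∈ I'` not used by `g`
  have himg : (Finset.univ.image ⇑g).card = s := by
    rw [Finset.card_image_of_injective _ g.injective, Finset.card_univ, Fintype.card_fin]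
  have hns : ¬ I' ⊆ Finset.univ.image ⇑g := by
    intro h
    have := Finset.card_le_card h
    omega
  obtain ⟨ℓ0, hℓ0I, hℓ0g⟩ := Finset.not_subset.mp hns
  have hℓ0r : ℓ0 ∉ Set.range ⇑g := by
    rintro ⟨p, hp⟩
    exact hℓ0g (Finset.mem_image.2 ⟨p, Finset.mem_univ _, hp⟩)
  -- extended column embedding
  let g' : Fin (s + 1) ↪ Fin b :=
    ⟨Fin.cons ℓ0 ⇑g, Fin.cons_injective_iff.2 ⟨hℓ0r, g.injective⟩⟩
  have hg'I : ∀ p, g' p ∈ I' := by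
    intro p
    refine Fin.cases ?_ ?_ p
    · exact hℓ0I
    · intro i
      simpa [g'] using hgI i
  -- the Buchsbaum–Rim second syzygy
  let d : Fin (s + 1) → MvPolynomial (Fin n) k :=
    fun p => (-1) ^ (p : ℕ) * (A.submatrix (⇑r) (⇑g' ∘ p.succAbove)).det
  let τ : Fin b → MvPolynomial (Fin n) k := Function.extend (⇑g') d 0
  have hτ : ∀ p, τ (g' p) = d p := fun p => g'.injective.extend_apply d 0 p
  refine ⟨Finset.univ.image ⇑g', ?_, τ, ?_, ?_, ?_, ?_, ?_⟩
  · -- subset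
    intro ℓ hℓ
    obtain ⟨p, -, hp⟩ := Finset.mem_image.1 hℓ
    exact hp ▸ hg'I p
  · -- τ ≠ 0
    have h0 : τ (g' 0) ≠ 0 := by
      rw [hτ 0]
      have hgg : ⇑g' ∘ (0 : Fin (s + 1)).succAbove = ⇑g := by
        funext i
        simp [g', Fin.succAbove_zero]
      simp only [d, hgg, Fin.val_zero, pow_zero, one_mul]
      exact hdet
    intro h
    exact h0 (by rw [h]; rfl)
  · -- support
    intro ℓ hℓ
    have : ¬ ∃ p, g' p = ℓ := by
      rintro ⟨p, hp⟩
      exact hℓ (Finset.mem_image.2 ⟨p, Finset.mem_univ _, hp⟩)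
    show Function.extend (⇑g') d 0 ℓ = 0
    rw [Function.extend_apply' d (0 : Fin b → MvPolynomial (Fin n) k) ℓ this]
    rfl
  · -- homogeneity
    intro ℓ hℓ
    obtain ⟨p, -, rfl⟩ := Finset.mem_image.1 hℓ
    rw [hτ p]
    have hD : ∑ i ∈ Finset.univ.image ⇑g', j i = ∑ q, j (g' q) :=
      Finset.sum_image (fun x _ y _ h => g'.injective h)
    have hdeg : (∑ i ∈ Finset.univ.image ⇑g', j i) - j (g' p)
        = ∑ i : Fin s, j (g' (p.succAbove i)) := by
      rw [hD, Fin.sum_univ_succAbove (fun q => j (g' q)) p]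
      omega
    rw [hdeg]
    have hdh : (A.submatrix (⇑r) (⇑g' ∘ p.succAbove)).det.IsHomogeneous
        (∑ i : Fin s, j (g' (p.succAbove i))) :=
      det_isHomogeneous_aux _ _ (fun i l => hhom (r i) (g' (p.succAbove l)))
    rcases Nat.even_or_odd (p : ℕ) with he | ho
    · simpa [d, he.neg_one_pow] using hdh
    · simp only [d, ho.neg_one_pow, neg_one_mul]
      rw [← MvPolynomial.mem_homogeneousSubmodule]
      exact neg_mem ((MvPolynomial.mem_homogeneousSubmodule _ _).2 hdh)
  · -- syzygy
    intro q
    rw [Finset.sum_image (fun x _ y _ h => g'.injective h)]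
    have hker : (A.submatrix (Fin.cons q ⇑r) ⇑g').det = 0 := by
      by_cases hq : q ∈ Set.range ⇑r
      · obtain ⟨i, hi⟩ := hq
        apply Matrix.det_zero_of_row_eq (i := (0 : Fin (s + 1))) (j := i.succ)
          (Fin.succ_ne_zero i).symm
        funext p
        simp [Matrix.submatrix_apply, hi]
      · by_contra hdet'
        exact hsmax ⟨⟨_, Fin.cons_injective_iff.2 ⟨hq, r.injective⟩⟩, g', hg'I, hdet'⟩
    calc ∑ p, A q (g' p) * τ (g' p)
        = (A.submatrix (Fin.cons q ⇑r) ⇑g').det := by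
          rw [Matrix.det_succ_row_zero]
          apply Finset.sum_congr rfl
          intro p _
          have h1 : (A.submatrix (Fin.cons q ⇑r) ⇑g').submatrix Fin.succ p.succAbove
              = A.submatrix (⇑r) (⇑g' ∘ p.succAbove) := by
            ext i jj
            simp [Matrix.submatrix_apply]
          rw [h1, hτ p]
          simp only [d, Matrix.submatrix_apply, Fin.cons_zero]
          ring
      _ = 0 := hker
  · -- degree inequality
    have hcard : (Finset.univ.image ⇑g').card = s + 1 := by
      rw [Finset.card_image_of_injective _ g'.injective, Finset.card_univ, Fintype.card_fin]
    have hsub : Finset.univ.image ⇑g' ⊆ I' := by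
      intro ℓ hℓ
      obtain ⟨p, -, hp⟩ := Finset.mem_image.1 hℓ
      exact hp ▸ hg'I p
    have hne : Finset.univ.image ⇑g' ≠ I' := by
      intro h
      rw [h, hI'] at hcard
      omega
    obtain ⟨x, hxI, hxn⟩ := Finset.exists_of_ssubset (lt_of_le_of_ne hsub hne)
    exact Finset.sum_lt_sum_of_subset hsub hxI hxn (hj1 x) (fun _ _ _ => Nat.zero_le _)
end

section
/- A diagram D of projective dimension 1 (with sorted generator degrees α₁ ≤ ... ≤ α_s and sorted syzygy degrees γ₁ ≤ ... ≤ γ_s) is the Betti diagram of a k[x]-module if and only if α_i + 1 ≤ γ_i for all i. In particular, B_N = B_mod in projective dimension 1, and B_mod is generated by pure diagrams. -/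
/-- Over `k[x]`, a projective dimension 1 diagram with sorted generator degrees
`α₁ ≤ … ≤ α_s` and sorted syzygy degrees `γ₁ ≤ … ≤ γ_s` is the Betti diagram of a
module if and only if `αᵢ + 1 ≤ γᵢ` for all `i`.  Being a Betti diagram is expressed
by the existence of a minimal graded injective presentation matrix
`φ : ⊕ S(-γⱼ) → ⊕ S(-αᵢ)`: a square matrix whose `(i,j)` entry is a scalar multiple of
`x^(γⱼ - αᵢ)` (and zero when `γⱼ - αᵢ ≤ 0`, which encodes minimality), with `det φ ≠ 0`. -/
theorem pd_one_betti_diagram_iff (k : Type*) [Field k] (s : ℕ) (α γ : Fin s → ℤ)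
    (hα : Monotone α) (hγ : Monotone γ) :
    (∃ φ : Matrix (Fin s) (Fin s) (Polynomial k),
      φ.det ≠ 0 ∧
      ∀ i j, (∃ c : k, φ i j = c • Polynomial.X ^ (γ j - α i).toNat) ∧
        (γ j - α i ≤ 0 → φ i j = 0)) ↔
    ∀ i, α i + 1 ≤ γ i := by
  constructor
  · rintro ⟨φ, hdet, hφ⟩
    by_contra h
    push_neg at h
    obtain ⟨i, hi⟩ := h
    have hi' : γ i ≤ α i := by omega
    apply hdet
    rw [Matrix.det_apply]
    refine Finset.sum_eq_zero fun σ _ => ?_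
    -- pigeonhole: some j ≤ i has i ≤ σ j
    have : ∃ j : Fin s, j ≤ i ∧ i ≤ σ j := by
      by_contra hc
      push_neg at hc
      have hsub : (Finset.Iic i).image σ ⊆ Finset.Iio i := by
        intro x hx
        simp only [Finset.mem_image, Finset.mem_Iic] at hx
        obtain ⟨j, hj, rfl⟩ := hx
        exact Finset.mem_Iio.2 (hc j hj)
      have hcard := Finset.card_le_card hsub
      rw [Finset.card_image_of_injective _ σ.injective, Fin.card_Iic, Fin.card_Iio] at hcard
      omega
    obtain ⟨j, hj, hσj⟩ := this
    have hz : φ (σ j) j = 0 := by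
      refine (hφ (σ j) j).2 ?_
      have h1 : γ j ≤ γ i := hγ hj
      have h2 : α i ≤ α (σ j) := hα hσj
      omega
    have hp : ∏ m : Fin s, φ (σ m) m = 0 := Finset.prod_eq_zero (Finset.mem_univ j) hz
    rw [hp, smul_zero]
  · intro h
    refine ⟨Matrix.diagonal fun i => Polynomial.X ^ (γ i - α i).toNat, ?_, ?_⟩
    · rw [Matrix.det_diagonal]
      exact Finset.prod_ne_zero_iff.2 fun i _ => pow_ne_zero _ Polynomial.X_ne_zero
    · intro i j
      constructor
      · by_cases hij : i = j
        · subst hij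
          exact ⟨1, by simp⟩
        · exact ⟨0, by simp [Matrix.diagonal_apply_ne _ hij]⟩
      · intro hle
        by_cases hij : i = j
        · subst hij; have := h i; omega
        · exact Matrix.diagonal_apply_ne _ hij
end

section
/- Over k[x,y], a set of linear syzygies on a 6×12 matrix of linear forms has dimension at most 6. More precisely: if T₁ is a 6×12 matrix of linear forms in k[x,y] and T₂ is a 12×m matrix of linear forms in k[x,y] with T₁·T₂ = 0 and the columns of T₂ k-linearly independent, then m ≤ 6. -/
open MvPolynomial

lemma fin2_degree_one (d : Fin 2 →₀ ℕ) (hd : d.degree = 1) :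
    d = Finsupp.single 0 1 ∨ d = Finsupp.single 1 1 := by
  have h : d 0 + d 1 = 1 := by
    have h2 : d.degree = ∑ i : Fin 2, d i :=
      Finset.sum_subset (Finset.subset_univ _)
        (fun i _ hi => Finsupp.notMem_support_iff.mp hi)
    rw [h2, Fin.sum_univ_two] at hd
    exact hd
  rcases Nat.eq_zero_or_pos (d 0) with h0 | h0
  · right
    ext i
    fin_cases i <;> simp_all [Finsupp.single_apply] <;> omega
  · left
    ext i
    fin_cases i <;> simp_all [Finsupp.single_apply] <;> omega

lemma lin_decomp {k : Type*} [Field k] (p : MvPolynomial (Fin 2) k)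
    (hp : p.IsHomogeneous 1) :
    p = C (coeff (Finsupp.single 0 1) p) * X 0 + C (coeff (Finsupp.single 1 1) p) * X 1 := by
  ext d
  rw [coeff_add, coeff_C_mul, coeff_C_mul, coeff_X', coeff_X']
  by_cases hd : d.degree = 1
  · rcases fin2_degree_one d hd with h | h <;> subst h <;>
      simp [Finsupp.single_left_inj, Finsupp.single_eq_single_iff]
  · rw [hp.coeff_eq_zero hd]
    have h0 : ¬ (Finsupp.single (0:Fin 2) 1 = d) := fun h => hd (by rw [← h]; simp [Finsupp.degree_single, Finsupp.support_single_ne_zero])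
    have h1 : ¬ (Finsupp.single (1:Fin 2) 1 = d) := fun h => hd (by rw [← h]; simp [Finsupp.degree_single, Finsupp.support_single_ne_zero])
    simp [h0, h1]

section
variable {k : Type*} [Field k]

local notation "e0" => Finsupp.single (0 : Fin 2) (1 : ℕ)
local notation "e1" => Finsupp.single (1 : Fin 2) (1 : ℕ)

lemma mul_lin_eq (p q : MvPolynomial (Fin 2) k)
    (hp : p.IsHomogeneous 1) (hq : q.IsHomogeneous 1) :
    p * q = monomial (e0 + e0) (coeff e0 p * coeff e0 q)
      + monomial (e0 + e1) (coeff e0 p * coeff e1 q + coeff e1 p * coeff e0 q)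
      + monomial (e1 + e1) (coeff e1 p * coeff e1 q) := by
  conv_lhs => rw [lin_decomp p hp, lin_decomp q hq]
  rw [C_mul_X_eq_monomial, C_mul_X_eq_monomial, C_mul_X_eq_monomial, C_mul_X_eq_monomial,
      add_mul, mul_add, mul_add,
      monomial_mul, monomial_mul, monomial_mul, monomial_mul]
  rw [show e1 + e0 = e0 + e1 from add_comm _ _, map_add]
  ring

lemma mono_ne_0 : (e0 : Fin 2 →₀ ℕ) ≠ e1 := by
  simp [Finsupp.single_eq_single_iff]

lemma mono_ne_1 : (e0 + e0 : Fin 2 →₀ ℕ) ≠ e0 + e1 := fun h => by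
  have := DFunLike.congr_fun h 1; simp [Finsupp.single_apply] at this

lemma mono_ne_2 : (e0 + e0 : Fin 2 →₀ ℕ) ≠ e1 + e1 := fun h => by
  have := DFunLike.congr_fun h 1; simp [Finsupp.single_apply] at this

lemma mono_ne_3 : (e0 + e1 : Fin 2 →₀ ℕ) ≠ e1 + e1 := fun h => by
  have := DFunLike.congr_fun h 0; simp [Finsupp.single_apply] at this

lemma coeff_xx (p q : MvPolynomial (Fin 2) k)
    (hp : p.IsHomogeneous 1) (hq : q.IsHomogeneous 1) :
    coeff (e0 + e0) (p * q) = coeff e0 p * coeff e0 q := by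
  rw [mul_lin_eq p q hp hq]
  simp [coeff_monomial, mono_ne_1.symm, mono_ne_2.symm, mono_ne_0, mono_ne_0.symm]

lemma coeff_xy (p q : MvPolynomial (Fin 2) k)
    (hp : p.IsHomogeneous 1) (hq : q.IsHomogeneous 1) :
    coeff (e0 + e1) (p * q) = coeff e0 p * coeff e1 q + coeff e1 p * coeff e0 q := by
  rw [mul_lin_eq p q hp hq]
  simp [coeff_monomial, mono_ne_1, mono_ne_3.symm, mono_ne_0, mono_ne_0.symm]

lemma combo {n : Type*} [Fintype n] (T : n → MvPolynomial (Fin 2) k)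
    (hT : ∀ l, (T l).IsHomogeneous 1) (v : n → k)
    (hv0 : ∑ l, v l * coeff e0 (T l) = 0) (hv1 : ∑ l, v l * coeff e1 (T l) = 0) :
    ∑ l, v l • T l = 0 := by
  calc ∑ l, v l • T l
      = ∑ l, (C (v l * coeff e0 (T l)) * X 0 + C (v l * coeff e1 (T l)) * X 1) := by
        refine Finset.sum_congr rfl fun l _ => ?_
        rw [smul_eq_C_mul]
        conv_lhs => rw [lin_decomp (T l) (hT l)]
        rw [map_mul, map_mul]
        ring
    _ = C (∑ l, v l * coeff e0 (T l)) * X 0 + C (∑ l, v l * coeff e1 (T l)) * X 1 := by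
        rw [Finset.sum_add_distrib, ← Finset.sum_mul, ← Finset.sum_mul, ← map_sum, ← map_sum]
    _ = 0 := by rw [hv0, hv1]; simp

lemma coeff_yy (p q : MvPolynomial (Fin 2) k)
    (hp : p.IsHomogeneous 1) (hq : q.IsHomogeneous 1) :
    coeff (e1 + e1) (p * q) = coeff e1 p * coeff e1 q := by
  rw [mul_lin_eq p q hp hq]
  simp [coeff_monomial, mono_ne_2, mono_ne_3, mono_ne_0, mono_ne_0.symm]
end



/-- Over `k[x,y]`, a `6 × 12` matrix of linear forms with `k`-linearly independent columns
admits at most `6` `k`-linearly independent linear syzygies: if `T₁ · T₂ = 0` with `T₂` a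
`12 × m` matrix of linear forms whose columns are `k`-linearly independent, then `m ≤ 6`. -/
theorem linear_syzygies_bound (k : Type*) [Field k] (m : ℕ)
    (T₁ : Matrix (Fin 6) (Fin 12) (MvPolynomial (Fin 2) k))
    (T₂ : Matrix (Fin 12) (Fin m) (MvPolynomial (Fin 2) k))
    (h1 : ∀ i j, (T₁ i j).IsHomogeneous 1)
    (h2 : ∀ i j, (T₂ i j).IsHomogeneous 1)
    (hT1cols : LinearIndependent k (fun j : Fin 12 => fun i => T₁ i j))
    (hmul : T₁ * T₂ = 0)
    (hT2cols : LinearIndependent k (fun j : Fin m => fun i => T₂ i j)) :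
    m ≤ 6 := by

  classical
  set A : Matrix (Fin 6) (Fin 12) k :=
    fun i l => MvPolynomial.coeff (Finsupp.single 0 1) (T₁ i l) with hAdef
  set B : Matrix (Fin 6) (Fin 12) k :=
    fun i l => MvPolynomial.coeff (Finsupp.single 1 1) (T₁ i l) with hBdef
  set a : Matrix (Fin 12) (Fin m) k :=
    fun l j => MvPolynomial.coeff (Finsupp.single 0 1) (T₂ l j) with hadef
  set b : Matrix (Fin 12) (Fin m) k :=
    fun l j => MvPolynomial.coeff (Finsupp.single 1 1) (T₂ l j) with hbdef
  have hentry : ∀ i j, ∑ l, T₁ i l * T₂ l j = 0 := by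
    intro i j
    have h := congrFun (congrFun hmul i) j
    simpa [Matrix.mul_apply] using h
  have hAa : A * a = 0 := by
    ext i j
    simp only [Matrix.mul_apply, Matrix.zero_apply]
    calc ∑ l, A i l * a l j
        = ∑ l, MvPolynomial.coeff (Finsupp.single 0 1 + Finsupp.single 0 1) (T₁ i l * T₂ l j) :=
          Finset.sum_congr rfl fun l _ => (coeff_xx _ _ (h1 i l) (h2 l j)).symm
      _ = MvPolynomial.coeff (Finsupp.single 0 1 + Finsupp.single 0 1) (∑ l, T₁ i l * T₂ l j) :=
          (MvPolynomial.coeff_sum _ _ _).symm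
      _ = 0 := by rw [hentry i j]; simp
  have hBb : B * b = 0 := by
    ext i j
    simp only [Matrix.mul_apply, Matrix.zero_apply]
    calc ∑ l, B i l * b l j
        = ∑ l, MvPolynomial.coeff (Finsupp.single 1 1 + Finsupp.single 1 1) (T₁ i l * T₂ l j) :=
          Finset.sum_congr rfl fun l _ => (coeff_yy _ _ (h1 i l) (h2 l j)).symm
      _ = MvPolynomial.coeff (Finsupp.single 1 1 + Finsupp.single 1 1) (∑ l, T₁ i l * T₂ l j) :=
          (MvPolynomial.coeff_sum _ _ _).symm
      _ = 0 := by rw [hentry i j]; simp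
  have hmix : A * b + B * a = 0 := by
    ext i j
    simp only [Matrix.add_apply, Matrix.mul_apply, Matrix.zero_apply]
    calc (∑ l, A i l * b l j) + ∑ l, B i l * a l j
        = ∑ l, (A i l * b l j + B i l * a l j) := (Finset.sum_add_distrib).symm
      _ = ∑ l, MvPolynomial.coeff (Finsupp.single 0 1 + Finsupp.single 1 1) (T₁ i l * T₂ l j) :=
          Finset.sum_congr rfl fun l _ => (coeff_xy _ _ (h1 i l) (h2 l j)).symm
      _ = MvPolynomial.coeff (Finsupp.single 0 1 + Finsupp.single 1 1) (∑ l, T₁ i l * T₂ l j) :=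
          (MvPolynomial.coeff_sum _ _ _).symm
      _ = 0 := by rw [hentry i j]; simp
  have hinj1 : ∀ v : Fin 12 → k, A.mulVec v = 0 → B.mulVec v = 0 → v = 0 := by
    intro v hAv hBv
    have h0 : ∑ l, v l • (fun i => T₁ i l) = 0 := by
      funext i
      have hc := combo (fun l => T₁ i l) (fun l => h1 i l) v
        (by simpa [Matrix.mulVec, dotProduct, mul_comm] using congrFun hAv i)
        (by simpa [Matrix.mulVec, dotProduct, mul_comm] using congrFun hBv i)
      simpa [Finset.sum_apply] using hc
    funext l
    exact Fintype.linearIndependent_iff.mp hT1cols v h0 l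
  have key : ∀ c : Fin m → k, (A * b).mulVec c = 0 → c = 0 := by
    intro c hc
    have hbz : b.mulVec c = 0 := by
      refine hinj1 _ ?_ ?_
      · rw [Matrix.mulVec_mulVec]; exact hc
      · rw [Matrix.mulVec_mulVec, hBb, Matrix.zero_mulVec]
    have haz : a.mulVec c = 0 := by
      refine hinj1 _ ?_ ?_
      · rw [Matrix.mulVec_mulVec, hAa, Matrix.zero_mulVec]
      · rw [Matrix.mulVec_mulVec, show B * a = -(A * b) from by
          rw [eq_neg_iff_add_eq_zero, add_comm]; exact hmix]
        rw [Matrix.neg_mulVec, hc, neg_zero]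
    have h0 : ∑ j, c j • (fun l => T₂ l j) = 0 := by
      funext l
      have hcb := combo (fun j => T₂ l j) (fun j => h2 l j) c
        (by simpa [Matrix.mulVec, dotProduct, mul_comm] using congrFun haz l)
        (by simpa [Matrix.mulVec, dotProduct, mul_comm] using congrFun hbz l)
      simpa [Finset.sum_apply] using hcb
    funext j
    exact Fintype.linearIndependent_iff.mp hT2cols c h0 j
  have hinj : Function.Injective ((A * b).mulVecLin) := by
    intro x y hxy
    have := key (x - y) (by
      have : (A * b).mulVecLin (x - y) = 0 := by rw [map_sub, hxy, sub_self]
      simpa [Matrix.mulVecLin_apply] using this)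
    exact sub_eq_zero.mp this
  have hle := LinearMap.finrank_le_finrank_of_injective hinj
  simpa using hle
end

section
/- The module M = coker of the 3×6 matrix [[x,y,z,0,0,0],[0,0,x,y,z,0],[x+y,0,0,x,y,z]] over S = k[x,y,z] has Betti diagram 3·D₁, where D₁ is the diagram with β₀,₀ = 1, β₁,₁ = 2, β₂,₃ = 2, β₃,₄ = 1; that is, β(M) has β₀,₀ = 3, β₁,₁ = 6, β₂,₃ = 6, β₃,₄ = 3 and all other Betti numbers zero. -/
open MvPolynomial

namespace BettiAux

variable {k : Type*} [Field k]

/-- Substitute `0` for the variable `i`. -/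
noncomputable def ev (i : Fin 3) :
    MvPolynomial (Fin 3) k →ₐ[k] MvPolynomial (Fin 3) k :=
  aeval (Function.update X i 0)

lemma ev_X_self (i : Fin 3) : ev (k := k) i (X i) = 0 := by
  simp [ev]

lemma ev_X_ne (i j : Fin 3) (h : j ≠ i) : ev (k := k) i (X j) = X j := by
  simp [ev, Function.update_of_ne h]

lemma X_dvd_sub_ev (i : Fin 3) (p : MvPolynomial (Fin 3) k) : X i ∣ p - ev i p := by
  induction p using MvPolynomial.induction_on with
  | C a => simp [ev]
  | add p q hp hq =>
      have h := dvd_add hp hq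
      rw [map_add]
      convert h using 1
      ring
  | mul_X p j hp =>
      rcases eq_or_ne j i with rfl | h
      · rw [map_mul, ev_X_self, mul_zero, sub_zero]
        exact Dvd.intro_left p rfl
      · rw [map_mul, ev_X_ne i j h]
        have := hp.mul_right (X j)
        rwa [sub_mul] at this

lemma exists_ev_split (i : Fin 3) (p : MvPolynomial (Fin 3) k) :
    ∃ q, p = ev i p + X i * q := by
  obtain ⟨q, hq⟩ := X_dvd_sub_ev i p
  exact ⟨q, by linear_combination hq⟩

lemma X_dvd_of_ev_eq_zero {i : Fin 3} {p : MvPolynomial (Fin 3) k} (h : ev i p = 0) :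
    X i ∣ p := by
  have h2 := X_dvd_sub_ev i p
  rwa [h, sub_zero] at h2

lemma ev_eq_zero_of_X_dvd {i : Fin 3} {p : MvPolynomial (Fin 3) k} (h : X i ∣ p) :
    ev i p = 0 := by
  obtain ⟨q, rfl⟩ := h
  rw [map_mul, ev_X_self, zero_mul]

lemma X_prime (i : Fin 3) : Prime (X i : MvPolynomial (Fin 3) k) := by
  refine ⟨X_ne_zero i, fun hu => ?_, fun a b hab => ?_⟩
  · obtain ⟨v, hv⟩ := isUnit_iff_exists_inv.mp hu
    have h := congrArg (ev (k := k) i) hv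
    rw [map_mul, ev_X_self, zero_mul, map_one] at h
    exact zero_ne_one h
  · obtain ⟨c, hc⟩ := hab
    have h : ev (k := k) i a * ev i b = 0 := by
      rw [← map_mul, hc, map_mul, ev_X_self, zero_mul]
    rcases mul_eq_zero.mp h with h' | h'
    · exact Or.inl (X_dvd_of_ev_eq_zero h')
    · exact Or.inr (X_dvd_of_ev_eq_zero h')

lemma X_not_dvd_X {i j : Fin 3} (h : j ≠ i) :
    ¬ (X i : MvPolynomial (Fin 3) k) ∣ X j := fun hd =>
  X_ne_zero (R := k) j (by rw [← ev_X_ne i j h]; exact ev_eq_zero_of_X_dvd hd)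

lemma dvd_of_dvd_mul1 {i j : Fin 3} (h : j ≠ i) {p : MvPolynomial (Fin 3) k}
    (hd : X i ∣ X j * p) : X i ∣ p :=
  ((X_prime i).dvd_or_dvd hd).resolve_left (X_not_dvd_X h)

lemma dvd_of_dvd_mulXX {i j l : Fin 3} (hj : j ≠ i) (hl : l ≠ i)
    {p : MvPolynomial (Fin 3) k} (hd : X i ∣ X j * X l * p) : X i ∣ p := by
  have h1 : ¬ (X i : MvPolynomial (Fin 3) k) ∣ X j * X l := fun hh =>
    ((X_prime i).dvd_or_dvd hh).elim (X_not_dvd_X hj) (X_not_dvd_X hl)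
  exact ((X_prime i).dvd_or_dvd hd).resolve_left h1

lemma cancelX {i : Fin 3} {p : MvPolynomial (Fin 3) k} (h : X i * p = 0) : p = 0 :=
  (mul_eq_zero.mp h).resolve_left (X_ne_zero i)

/-- Koszul syzygies of the regular sequence `x, y, z`. -/
lemma syz3 {a b c : MvPolynomial (Fin 3) k}
    (h : X 0 * a + X 1 * b + X 2 * c = 0) :
    ∃ p q r, a = X 1 * p + X 2 * q ∧ b = -(X 0 * p) + X 2 * r ∧
      c = -(X 0 * q) - X 1 * r := by
  obtain ⟨q, hq⟩ := exists_ev_split (k := k) 2 a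
  obtain ⟨r, hr⟩ := exists_ev_split (k := k) 2 b
  have h2 : X 0 * ev 2 a + X 1 * ev 2 b = 0 := by
    have h' := congrArg (ev (k := k) 2) h
    simpa [map_add, map_mul, ev_X_ne 2 0 (by decide), ev_X_ne 2 1 (by decide),
      ev_X_self] using h'
  have hc : c = -(X 0 * q) - X 1 * r := by
    have hz : X 2 * (c + X 0 * q + X 1 * r) = 0 := by
      linear_combination h - X 0 * hq - X 1 * hr - h2
    have h0 := cancelX hz
    linear_combination h0
  have h1 : ev (k := k) 1 (ev 2 a) = 0 := by
    have h' := congrArg (ev (k := k) 1) h2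
    rw [map_add, map_mul, map_mul, ev_X_ne 1 0 (by decide), ev_X_self, zero_mul,
      add_zero, map_zero] at h'
    exact (mul_eq_zero.mp h').resolve_left (X_ne_zero 0)
  obtain ⟨p, hp⟩ := X_dvd_of_ev_eq_zero h1
  have hb : ev (k := k) 2 b = -(X 0 * p) := by
    have : X 1 * ev (k := k) 2 b = X 1 * -(X 0 * p) := by
      linear_combination h2 - X 0 * hp
    exact mul_left_cancel₀ (X_ne_zero 1) this
  exact ⟨p, q, r, by rw [hq, hp], by rw [hr, hb], hc⟩

noncomputable def Bmat (k : Type*) [Field k] :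
    Matrix (Fin 6) (Fin 6) (MvPolynomial (Fin 3) k) :=
  !![-(X 0 * X 1), X 1 * X 1, X 1 * X 2, 0, 0, X 2 * X 2;
     X 0 * X 0 + X 1 * X 2, -(X 0 * X 1), -(X 0 * X 2), X 2 * X 2, 0, -(X 1 * X 2);
     -(X 1 * X 1), 0, 0, -(X 1 * X 2), 0, X 1 * X 1 - X 0 * X 2;
     X 0 * X 1 - X 0 * X 2, X 0 * X 2 + X 1 * X 2, 0, X 0 * X 2, X 2 * X 2, -(X 0 * X 1);
     X 0 * X 1, -(X 1 * X 1) - X 0 * X 1, 0, 0, -(X 1 * X 2), X 0 * X 0;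
     X 0 * X 0, -(X 0 * X 1) - X 0 * X 0, -(X 1 * X 1) - X 0 * X 1, -(X 0 * X 0),
       X 1 * X 1 - X 0 * X 2, -(X 1 * X 2) - X 0 * X 2]

noncomputable def Cmat (k : Type*) [Field k] :
    Matrix (Fin 6) (Fin 3) (MvPolynomial (Fin 3) k) :=
  !![-(X 2), X 1, 0;
     0, X 0, -(X 2);
     -(X 0), -(X 2), X 1;
     X 1, -(X 0), 0;
     -(X 0), 0, X 0 + X 1;
     0, X 1, 0]

noncomputable def Amat (k : Type*) [Field k] :
    Matrix (Fin 3) (Fin 6) (MvPolynomial (Fin 3) k) :=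
  !![X 0, X 1, X 2, 0, 0, 0;
     0, 0, X 0, X 1, X 2, 0;
     X 0 + X 1, 0, 0, X 0, X 1, X 2]

lemma cons_val_five {α : Type*} {m : ℕ} (x : α)
    (u : Fin m.succ.succ.succ.succ.succ → α) :
    Matrix.vecCons x u 5 =
      Matrix.vecHead (Matrix.vecTail (Matrix.vecTail (Matrix.vecTail (Matrix.vecTail u)))) :=
  rfl

lemma vecCons_eq_iff {α : Type*} {n : ℕ} {a b : α} {u v : Fin n → α} :
    Matrix.vecCons a u = Matrix.vecCons b v ↔ a = b ∧ u = v := by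
  constructor
  · intro h
    refine ⟨congrFun h 0, funext fun i => ?_⟩
    have := congrFun h i.succ
    rwa [Matrix.cons_val_succ, Matrix.cons_val_succ] at this
  · rintro ⟨rfl, rfl⟩; rfl

lemma zerovec6 : (0 : Fin 6 → MvPolynomial (Fin 3) k) = ![0, 0, 0, 0, 0, 0] := by
  funext i; fin_cases i <;> rfl

lemma zerovec3 : (0 : Fin 3 → MvPolynomial (Fin 3) k) = ![0, 0, 0] := by
  funext i; fin_cases i <;> rfl

lemma homog_neg {φ : MvPolynomial (Fin 3) k} {n : ℕ} (h : φ.IsHomogeneous n) :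
    (-φ).IsHomogeneous n := by
  have := h.C_mul (-1)
  simpa [map_neg, neg_one_mul] using this

lemma homog_sub {p q : MvPolynomial (Fin 3) k} {n : ℕ} (h1 : p.IsHomogeneous n)
    (h2 : q.IsHomogeneous n) : (p - q).IsHomogeneous n := by
  rw [sub_eq_add_neg]; exact h1.add (homog_neg h2)

lemma homog2 (i j : Fin 3) : (X i * X j : MvPolynomial (Fin 3) k).IsHomogeneous 2 :=
  (isHomogeneous_X k i).mul (isHomogeneous_X k j)

lemma Bmat_homog : ∀ i j, ((Bmat k) i j).IsHomogeneous 2 := by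
  intro i j
  fin_cases i <;> fin_cases j <;>
    simp only [Bmat, Matrix.cons_val', Matrix.cons_val_zero, Matrix.cons_val_one,
      Matrix.head_cons, Matrix.empty_val', Matrix.cons_val_fin_one, Matrix.head_fin_const,
      Matrix.of_apply, Matrix.cons_val_two, Matrix.cons_val_three, Matrix.cons_val_four,
      cons_val_five, Matrix.tail_cons]
  exacts [homog_neg (homog2 0 1), homog2 1 1, homog2 1 2, isHomogeneous_zero _ _ _,
    isHomogeneous_zero _ _ _, homog2 2 2, (homog2 0 0).add (homog2 1 2),
    homog_neg (homog2 0 1), homog_neg (homog2 0 2), homog2 2 2, isHomogeneous_zero _ _ _,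
    homog_neg (homog2 1 2), homog_neg (homog2 1 1), isHomogeneous_zero _ _ _,
    isHomogeneous_zero _ _ _, homog_neg (homog2 1 2), isHomogeneous_zero _ _ _,
    homog_sub (homog2 1 1) (homog2 0 2), homog_sub (homog2 0 1) (homog2 0 2),
    (homog2 0 2).add (homog2 1 2), isHomogeneous_zero _ _ _, homog2 0 2, homog2 2 2,
    homog_neg (homog2 0 1), homog2 0 1, homog_sub (homog_neg (homog2 1 1)) (homog2 0 1),
    isHomogeneous_zero _ _ _, isHomogeneous_zero _ _ _, homog_neg (homog2 1 2), homog2 0 0,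
    homog2 0 0, homog_sub (homog_neg (homog2 0 1)) (homog2 0 0),
    homog_sub (homog_neg (homog2 1 1)) (homog2 0 1), homog_neg (homog2 0 0),
    homog_sub (homog2 1 1) (homog2 0 2), homog_sub (homog_neg (homog2 1 2)) (homog2 0 2)]

lemma Cmat_homog : ∀ i j, ((Cmat k) i j).IsHomogeneous 1 := by
  intro i j
  fin_cases i <;> fin_cases j <;>
    simp only [Cmat, Matrix.cons_val', Matrix.cons_val_zero, Matrix.cons_val_one,
      Matrix.head_cons, Matrix.empty_val', Matrix.cons_val_fin_one, Matrix.head_fin_const,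
      Matrix.of_apply, Matrix.cons_val_two, Matrix.tail_cons]
  exacts [homog_neg (isHomogeneous_X _ 2), isHomogeneous_X _ 1, isHomogeneous_zero _ _ _,
    isHomogeneous_zero _ _ _, isHomogeneous_X _ 0, homog_neg (isHomogeneous_X _ 2),
    homog_neg (isHomogeneous_X _ 0), homog_neg (isHomogeneous_X _ 2), isHomogeneous_X _ 1,
    isHomogeneous_X _ 1, homog_neg (isHomogeneous_X _ 0), isHomogeneous_zero _ _ _,
    homog_neg (isHomogeneous_X _ 0), isHomogeneous_zero _ _ _,
    (isHomogeneous_X _ 0).add (isHomogeneous_X _ 1), isHomogeneous_zero _ _ _,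
    isHomogeneous_X _ 1, isHomogeneous_zero _ _ _]

lemma Cmat_inj : Function.Injective (Matrix.toLin' (Cmat k)) := by
  rw [injective_iff_map_eq_zero]
  intro v hv
  rw [Matrix.toLin'_apply] at hv
  have h0 := congrFun hv 0
  have h1 := congrFun hv 1
  have h5 := congrFun hv 5
  simp only [Cmat, Matrix.mulVec, dotProduct, Fin.sum_univ_three,
    Matrix.cons_val', Matrix.cons_val_zero, Matrix.cons_val_one, Matrix.head_cons,
    Matrix.empty_val', Matrix.cons_val_fin_one, Matrix.head_fin_const, Matrix.cons_val_two,
    Matrix.of_apply, Matrix.tail_cons, cons_val_five, Pi.zero_apply] at h0 h1 h5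
  have hv1 : v 1 = 0 := by
    have h : X (σ := Fin 3) (R := k) 1 * v 1 = 0 := by linear_combination h5
    exact cancelX h
  have hv0 : v 0 = 0 := by
    have h : X (σ := Fin 3) (R := k) 2 * v 0 = 0 := by
      linear_combination (-1 : MvPolynomial (Fin 3) k) * h0 + X 1 * hv1
    exact cancelX h
  have hv2 : v 2 = 0 := by
    have h : X (σ := Fin 3) (R := k) 2 * v 2 = 0 := by
      linear_combination (-1 : MvPolynomial (Fin 3) k) * h1 + X 0 * hv1
    exact cancelX h
  funext i
  fin_cases i
  exacts [hv0, hv1, hv2]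

lemma exact_CB :
    Function.Exact (Matrix.toLin' (Cmat k)) (Matrix.toLin' (Bmat k)) := by
  intro w
  constructor
  · intro h
    rw [Matrix.toLin'_apply] at h
    have hw : w = ![w 0, w 1, w 2, w 3, w 4, w 5] := by funext i; fin_cases i <;> rfl
    rw [hw] at h
    simp only [Bmat, Matrix.cons_mulVec, Matrix.cons_dotProduct, Matrix.dotProduct_of_isEmpty, Matrix.empty_mulVec,
      Matrix.cons_val_zero, Matrix.cons_val_one, Matrix.head_cons, Matrix.tail_cons,
      add_zero] at h
    rw [zerovec6] at h
    simp only [vecCons_eq_iff] at h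
    obtain ⟨E1, E2, E3, E4, E5, E6, -⟩ := h
    -- from row 3: z ∣ y²(w5 - w0)
    have hm' : (X 2 : MvPolynomial (Fin 3) k) ∣ X 1 * X 1 * (w 5 - w 0) :=
      ⟨X 0 * w 5 + X 1 * w 3, by linear_combination E3⟩
    obtain ⟨m, hm⟩ := dvd_of_dvd_mulXX (by decide) (by decide) hm'
    have hk : X 1 * X 1 * m - (X 0 * w 5 + X 1 * w 3) = 0 :=
      cancelX (i := 2) (by linear_combination E3 - X 1 * X 1 * hm)
    have hn' : (X 1 : MvPolynomial (Fin 3) k) ∣ X 0 * w 5 :=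
      ⟨X 1 * m - w 3, by linear_combination -hk⟩
    obtain ⟨n, hn⟩ := dvd_of_dvd_mul1 (by decide) hn'
    have hc1 : w 3 - (X 1 * m - X 0 * n) = 0 :=
      cancelX (i := 1) (by linear_combination -hk - X 0 * hn)
    have hg : w 0 - (X 1 * n - X 2 * m) = 0 := by linear_combination hn - hm
    -- from row 1
    have hE1c : X 2 * (w 2 + X 0 * m + X 2 * n) - (X 0 * X 1 * n - X 1 * w 1) = 0 :=
      cancelX (i := 1)
        (by linear_combination E1 + X 0 * X 1 * hg - X 2 * X 2 * hn)
    have h2' : (X 1 : MvPolynomial (Fin 3) k) ∣ X 2 * (w 2 + X 0 * m + X 2 * n) :=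
      ⟨X 0 * n - w 1, by linear_combination hE1c⟩
    obtain ⟨g2, hg2'⟩ := dvd_of_dvd_mul1 (by decide) h2'
    have hgg : w 2 + X 0 * m + X 2 * n - X 1 * g2 = 0 := by linear_combination hg2'
    have hd : w 1 - (X 0 * n - X 2 * g2) = 0 :=
      cancelX (i := 1) (by linear_combination hE1c - X 2 * hgg)
    -- from row 5
    have h5' : X 1 * (X 2 * (w 4 - (X 0 * g2 + X 1 * g2 - X 0 * m))) = 0 := by
      linear_combination -E5 + X 0 * X 1 * hg - (X 1 * X 1 + X 0 * X 1) * hd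
        + X 0 * X 0 * hn
    have hr : w 4 - (X 0 * g2 + X 1 * g2 - X 0 * m) = 0 := cancelX (cancelX h5')
    refine ⟨![m, n, g2], ?_⟩
    rw [Matrix.toLin'_apply, hw]
    simp only [Cmat, Matrix.cons_mulVec, Matrix.cons_dotProduct, Matrix.dotProduct_of_isEmpty, Matrix.empty_mulVec,
      Matrix.cons_val_zero, Matrix.cons_val_one, Matrix.head_cons, Matrix.tail_cons,
      add_zero]
    simp only [vecCons_eq_iff]
    exact ⟨by linear_combination -hg, by linear_combination -hd, by linear_combination -hgg,
      by linear_combination -hc1, by linear_combination -hr, by linear_combination -hn,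
      trivial⟩
  · rintro ⟨t, rfl⟩
    rw [Matrix.toLin'_apply, Matrix.toLin'_apply]
    have ht : t = ![t 0, t 1, t 2] := by funext i; fin_cases i <;> rfl
    rw [ht]
    simp only [Bmat, Cmat, Matrix.cons_mulVec, Matrix.cons_dotProduct,
      Matrix.dotProduct_of_isEmpty, Matrix.empty_mulVec, Matrix.cons_val_zero, Matrix.cons_val_one, Matrix.head_cons,
      Matrix.tail_cons, add_zero]
    rw [zerovec6]
    simp only [vecCons_eq_iff]
    exact ⟨by ring, by ring, by ring, by ring, by ring, by ring, trivial⟩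

lemma exact_BA :
    Function.Exact (Matrix.toLin' (Bmat k)) (Matrix.toLin' (Amat k)) := by
  intro v
  constructor
  · intro h
    rw [Matrix.toLin'_apply] at h
    have hv : v = ![v 0, v 1, v 2, v 3, v 4, v 5] := by funext i; fin_cases i <;> rfl
    rw [hv] at h
    simp only [Amat, Matrix.cons_mulVec, Matrix.cons_dotProduct, Matrix.dotProduct_of_isEmpty, Matrix.empty_mulVec,
      Matrix.cons_val_zero, Matrix.cons_val_one, Matrix.head_cons, Matrix.tail_cons,
      add_zero] at h
    rw [zerovec3] at h
    simp only [vecCons_eq_iff] at h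
    obtain ⟨q0, q1, q2, -⟩ := h
    have Eq0 : X 0 * v 0 + X 1 * v 1 + X 2 * v 2 = 0 := by linear_combination q0
    have Eq1 : X 0 * v 2 + X 1 * v 3 + X 2 * v 4 = 0 := by linear_combination q1
    have Eq2 : (X 0 + X 1) * v 0 + X 0 * v 3 + X 1 * v 4 + X 2 * v 5 = 0 := by
      linear_combination q2
    obtain ⟨A1, B1, C1, hv0, hv1, hv2⟩ := syz3 Eq0
    have Eq1' : X 0 * (-(X 0 * B1)) + X 1 * (v 3 - X 0 * C1) + X 2 * v 4 = 0 := by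
      linear_combination Eq1 - X 0 * hv2
    obtain ⟨P, Q, R, hB1', hv3', hv4⟩ := syz3 Eq1'
    have hv3 : v 3 = X 0 * C1 - X 0 * P + X 2 * R := by linear_combination hv3'
    have EqB : X 0 * B1 + X 1 * P + X 2 * Q = 0 := by linear_combination -hB1'
    obtain ⟨Sv, Tv, Uv, hB1, hP, hQ⟩ := syz3 EqB
    rw [hv0, hv3, hv4, hB1, hP, hQ] at Eq2
    have key : X 0 * X 0 * (C1 + X 0 * Sv + X 1 * Tv)
        + X 1 * ((X 0 + X 1) * A1 + X 0 * X 1 * Uv - X 1 * R)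
        + X 2 * (v 5 + (X 1 * X 2 * Tv + X 1 * X 1 * Sv + X 0 * R + X 0 * X 2 * Tv
            + X 0 * X 1 * Sv - X 0 * X 0 * Uv)) = 0 := by
      linear_combination Eq2
    have h' := congrArg (ev (k := k) 2) key
    simp only [map_add, map_sub, map_mul, ev_X_self, ev_X_ne 2 0 (by decide),
      ev_X_ne 2 1 (by decide), map_zero, zero_mul, mul_zero, add_zero, zero_add] at h'
    have key2 : X 0 * X 0 * (ev (k := k) 2 C1 + X 0 * ev 2 Sv + X 1 * ev 2 Tv)
        + X 1 * ((X 0 + X 1) * ev 2 A1 + X 0 * X 1 * ev 2 Uv - X 1 * ev 2 R) = 0 := by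
      linear_combination h'
    have hGd : (X 1 : MvPolynomial (Fin 3) k) ∣
        X 0 * (X 0 * (ev (k := k) 2 C1 + X 0 * ev 2 Sv + X 1 * ev 2 Tv)) :=
      ⟨-((X 0 + X 1) * ev 2 A1 + X 0 * X 1 * ev 2 Uv - X 1 * ev 2 R), by
        linear_combination key2⟩
    obtain ⟨G, hG⟩ := dvd_of_dvd_mul1 (by decide) (dvd_of_dvd_mul1 (by decide) hGd)
    have hbeta : (X 0 + X 1) * ev (k := k) 2 A1 + X 0 * X 1 * ev 2 Uv - X 1 * ev 2 R
        = -(X 0 * X 0 * G) := by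
      refine mul_left_cancel₀ (X_ne_zero 1) ?_
      linear_combination key2 - X 0 * X 0 * hG
    have hDd : (X 1 : MvPolynomial (Fin 3) k) ∣ X 0 * (ev (k := k) 2 A1 + X 0 * G) :=
      ⟨ev 2 R - ev 2 A1 - X 0 * ev 2 Uv, by linear_combination hbeta⟩
    obtain ⟨D, hD⟩ := dvd_of_dvd_mul1 (by decide) hDd
    have hRe : ev (k := k) 2 R = X 0 * D - X 0 * G + X 1 * D + X 0 * ev 2 Uv := by
      refine mul_left_cancel₀ (X_ne_zero 1) ?_
      linear_combination (X 0 + X 1) * hD - hbeta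
    obtain ⟨A2, hA2⟩ := exists_ev_split (k := k) 2 A1
    obtain ⟨C2, hC2⟩ := exists_ev_split (k := k) 2 C1
    obtain ⟨R2, hR2⟩ := exists_ev_split (k := k) 2 R
    obtain ⟨S2, hS2⟩ := exists_ev_split (k := k) 2 Sv
    obtain ⟨T2, hT2⟩ := exists_ev_split (k := k) 2 Tv
    obtain ⟨U2, hU2⟩ := exists_ev_split (k := k) 2 Uv
    have eA : A1 = -(X 0 * G) + X 1 * D + X 2 * A2 := by linear_combination hA2 + hD
    have eC : C1 = X 1 * G - X 0 * Sv - X 1 * Tv + X 2 * (C2 + X 0 * S2 + X 1 * T2) := by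
      linear_combination hC2 + hG + X 0 * hS2 + X 1 * hT2
    have eR : R = X 0 * (D - G) + X 1 * D + X 0 * Uv + X 2 * (R2 - X 0 * U2) := by
      linear_combination hR2 + hRe - X 0 * hU2
    rw [eA, eC, eR] at key
    have hv5 : v 5 - (-(X 1 * X 2 * Tv) + X 1 * X 1 * R2 - X 1 * X 1 * Sv - X 1 * X 1 * A2
        - X 0 * X 2 * R2 - X 0 * X 2 * Tv - X 0 * X 1 * Sv - X 0 * X 1 * D - X 0 * X 1 * A2
        - X 0 * X 1 * X 1 * U2 - X 0 * X 0 * C2 - X 0 * X 0 * D + X 0 * X 0 * G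
        + X 0 * X 0 * X 2 * U2 - X 0 * X 0 * X 1 * T2 - X 0 * X 0 * X 0 * S2) = 0 :=
      cancelX (i := 2) (by linear_combination key)
    refine ⟨![G, D, A2 + Sv, C2 + X 0 * S2 + X 1 * T2, R2 - X 0 * U2, Tv], ?_⟩
    rw [Matrix.toLin'_apply, hv]
    simp only [Bmat, Matrix.cons_mulVec, Matrix.cons_dotProduct, Matrix.dotProduct_of_isEmpty, Matrix.empty_mulVec,
      Matrix.cons_val_zero, Matrix.cons_val_one, Matrix.head_cons, Matrix.tail_cons,
      add_zero]
    simp only [vecCons_eq_iff]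
    refine ⟨?_, ?_, ?_, ?_, ?_, ?_, trivial⟩
    · rw [hv0, hB1, eA]; ring
    · rw [hv1, eA, eC]; ring
    · rw [hv2, hB1, eC]; ring
    · rw [hv3, eC, hP, eR]; ring
    · rw [hv4, hQ, eR]; ring
    · linear_combination -hv5
  · rintro ⟨u, rfl⟩
    rw [Matrix.toLin'_apply, Matrix.toLin'_apply]
    have hu : u = ![u 0, u 1, u 2, u 3, u 4, u 5] := by funext i; fin_cases i <;> rfl
    rw [hu]
    simp only [Amat, Bmat, Matrix.cons_mulVec, Matrix.cons_dotProduct,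
      Matrix.dotProduct_of_isEmpty, Matrix.empty_mulVec, Matrix.cons_val_zero, Matrix.cons_val_one, Matrix.head_cons,
      Matrix.tail_cons, add_zero]
    rw [zerovec3]
    simp only [vecCons_eq_iff]
    exact ⟨by ring, by ring, by ring, trivial⟩

end BettiAux

open BettiAux in
/-- The module `M = coker [[x,y,z,0,0,0],[0,0,x,y,z,0],[x+y,0,0,x,y,z]]` over
`S = k[x,y,z]` has Betti diagram `3·D₁` where `D₁ = π₍₀,₁,₃,₄₎`: its minimal graded free
resolution has the form `0 → S(-4)³ → S(-3)⁶ → S(-1)⁶ → S³ → M → 0`.  This is expressed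
by the existence of a matrix `B` of quadrics and a matrix `C` of linear forms making the
corresponding complex exact (minimality is automatic since all entries have positive
degree). -/
theorem betti_diagram_of_explicit_cokernel (k : Type*) [Field k] :
    ∃ (B : Matrix (Fin 6) (Fin 6) (MvPolynomial (Fin 3) k))
      (C : Matrix (Fin 6) (Fin 3) (MvPolynomial (Fin 3) k)),
      (∀ i j, (B i j).IsHomogeneous 2) ∧
      (∀ i j, (C i j).IsHomogeneous 1) ∧
      Function.Injective (Matrix.toLin' C) ∧
      Function.Exact (Matrix.toLin' C) (Matrix.toLin' B) ∧
      Function.Exact (Matrix.toLin' B) (Matrix.toLin'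
        (!![X 0, X 1, X 2, 0, 0, 0;
            0, 0, X 0, X 1, X 2, 0;
            X 0 + X 1, 0, 0, X 0, X 1, X 2] :
          Matrix (Fin 3) (Fin 6) (MvPolynomial (Fin 3) k))) := by
  exact ⟨Bmat k, Cmat k, Bmat_homog, Cmat_homog, Cmat_inj, exact_CB, exact_BA⟩
end

section
/- The pure diagram π_{(0,1,3,4)} = (β₀,₀, β₁,₁, β₂,₃, β₃,₄) = (1, 2, 2, 1) is not the Betti diagram of any graded module over k[x₁,...,xₙ]: there is no module M with β₀,₀(M) = 1, β₁,₁(M) = 2, β₂,₃(M) = 2, β₃,₄(M) = 1, and all other β_{i,j}(M) = 0. -/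
open MvPolynomial

lemma hc_one_mul_isHomog_two {k : Type*} [Field k] {n : ℕ}
    {p q : MvPolynomial (Fin n) k} (hp : p.IsHomogeneous 2) :
    homogeneousComponent 1 (p * q) = 0 := by
  ext d
  rw [coeff_homogeneousComponent, coeff_zero]
  split_ifs with hd
  · rw [coeff_mul]
    apply Finset.sum_eq_zero
    rintro ⟨u, v⟩ huv
    rw [Finset.HasAntidiagonal.mem_antidiagonal] at huv
    by_cases hu : coeff u p = 0
    · simp [hu]
    · exfalso
      have h2 : u.degree = 2 := by
        have := hp hu
        rw [Finsupp.degree_eq_weight_one]; exact this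
      have h3 : (u + v).degree = u.degree + v.degree := by
        simp [Finsupp.degree_eq_weight_one, map_add]
      rw [huv, hd] at h3
      omega
  · rfl

/-- The pure diagram `π₍₀,₁,₃,₄₎ = (β₀₀, β₁₁, β₂₃, β₃₄) = (1, 2, 2, 1)` is not the Betti
diagram of any graded module over `k[x₁,…,xₙ]`: there is no minimal graded free resolution
`0 → S(-4) → S(-3)² → S(-1)² → S` with the prescribed shape.  Here `A` is the `1 × 2`
presentation matrix of linear forms (linearly independent over `k`, by minimality), `B` is
a `2 × 2` matrix of quadrics and `C` a `2 × 1` matrix of linear forms, and exactness of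
the resulting complex is required. -/
theorem pure_diagram_0134_not_betti (k : Type*) [Field k] (n : ℕ) :
    ¬ ∃ (A : Matrix (Fin 1) (Fin 2) (MvPolynomial (Fin n) k))
        (B : Matrix (Fin 2) (Fin 2) (MvPolynomial (Fin n) k))
        (C : Matrix (Fin 2) (Fin 1) (MvPolynomial (Fin n) k)),
      (∀ i j, (A i j).IsHomogeneous 1) ∧
      (∀ i j, (B i j).IsHomogeneous 2) ∧
      (∀ i j, (C i j).IsHomogeneous 1) ∧
      LinearIndependent k (fun j : Fin 2 => fun i => A i j) ∧
      Function.Injective (Matrix.toLin' C) ∧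
      Function.Exact (Matrix.toLin' C) (Matrix.toLin' B) ∧
      Function.Exact (Matrix.toLin' B) (Matrix.toLin' A) := by
  rintro ⟨A, B, C, hA, hB, hC, hind, hCinj, hexCB, hexBA⟩
  -- the Koszul syzygy
  set v : Fin 2 → MvPolynomial (Fin n) k := ![A 0 1, -A 0 0] with hv
  have hAv : Matrix.toLin' A v = 0 := by
    funext i
    fin_cases i
    simp [Matrix.toLin'_apply, Matrix.mulVec, dotProduct, Fin.sum_univ_two, hv, mul_comm]
  obtain ⟨w, hw⟩ := (hexBA v).mp hAv
  have hvhom : ∀ j, (v j).IsHomogeneous 1 := by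
    intro j
    fin_cases j
    · simpa [hv] using hA 0 1
    · simpa [hv] using (hA 0 0).neg
  have hz : ∀ j, v j = 0 := by
    intro j
    have h1 : homogeneousComponent 1 (v j) = v j := by
      rw [homogeneousComponent_of_mem (hvhom j), if_pos rfl]
    rw [← h1, ← hw, Matrix.toLin'_apply]
    have : (B.mulVec w) j = ∑ i, B j i * w i := rfl
    rw [this, map_sum]
    exact Finset.sum_eq_zero fun i _ => hc_one_mul_isHomog_two (hB j i)
  have hne := hind.ne_zero 0
  apply hne
  funext i
  fin_cases i
  have h0 : A 0 0 = 0 := by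
    have := hz 1
    simpa [hv] using this
  simpa using h0
end
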